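/- Suppose β > 1 and h > 0, and let m₀ ∈ (0,1) be the largest solution in (−1,1) of the Curie-Weiss equation m = tanh(β(m+h)). Then β < 1/(1 − m₀²). -/

import Mathlib

/-- `m₀` is the largest solution in `(-1,1)` of the Curie-Weiss equation
`m = tanh(β(m+h))`, and it lies in `(0,1)`. -/
def IsLargestCWRoot (β h m₀ : ℝ) : Prop :=
  m₀ ∈ Set.Ioo (0 : ℝ) 1 ∧ m₀ = Real.tanh (β * (m₀ + h)) ∧
    ∀ m ∈ Set.Ioo (-1 : ℝ) 1, m = Real.tanh (β * (m + h)) → m ≤ m₀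

/-- Lemma on slopes: if `β > 1`, `h > 0` and `m₀ ∈ (0,1)` is the largest
solution in `(-1,1)` of the Curie-Weiss equation, then `β < 1/(1 - m₀²)`. -/
theorem curieWeiss_slope (β h m₀ : ℝ) (hβ : 1 < β) (hh : 0 < h)
    (hm₀ : IsLargestCWRoot β h m₀) :
    β < 1 / (1 - m₀ ^ 2) := by
  obtain ⟨⟨hm0, hm1⟩, heq, _⟩ := hm₀
  set x := β * (m₀ + h) with hx
  have hβ0 : (0 : ℝ) < β := by linarith
  have hxpos : 0 < x := by
    have : 0 < m₀ + h := by linarith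
    positivity
  have hsinh : x < Real.sinh x := Real.self_lt_sinh_iff.mpr hxpos
  have hcosh : 1 ≤ Real.cosh x := Real.one_le_cosh x
  have hcoshpos : 0 < Real.cosh x := by linarith
  have hsinhpos : 0 < Real.sinh x := by linarith
  have htanh : m₀ = Real.sinh x / Real.cosh x := by rw [heq, Real.tanh_eq_sinh_div_cosh]
  have hpyth : Real.cosh x ^ 2 - Real.sinh x ^ 2 = 1 := Real.cosh_sq_sub_sinh_sq x
  -- β * m₀ < x
  have h1 : β * m₀ < x := by
    have : 0 < β * h := by positivity
    nlinarith
  -- so β * sinh x < sinh x * cosh² x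
  have h2 : β * Real.sinh x < Real.sinh x * Real.cosh x ^ 2 := by
    have hm : β * Real.sinh x < x * Real.cosh x := by
      have := h1
      rw [htanh] at this
      have : β * (Real.sinh x / Real.cosh x) * Real.cosh x < x * Real.cosh x := by
        nlinarith
      calc β * Real.sinh x = β * (Real.sinh x / Real.cosh x) * Real.cosh x := by
            field_simp
        _ < x * Real.cosh x := this
    calc β * Real.sinh x < x * Real.cosh x := hm
      _ < Real.sinh x * Real.cosh x := by nlinarith
      _ ≤ Real.sinh x * Real.cosh x ^ 2 := by nlinarith [mul_le_mul_of_nonneg_left hcosh (le_of_lt hsinhpos)]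
  have hβlt : β < Real.cosh x ^ 2 := by nlinarith
  have hden : 1 - m₀ ^ 2 = 1 / Real.cosh x ^ 2 := by
    rw [htanh]; field_simp; exact hpyth
  rw [hden, one_div_one_div]
  exact hβlt
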